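/- Let p be a prime with p ≡ 1 (mod 4) and let q be a prime with q ≡ 3 (mod 4) such that q is not a quadratic residue modulo p. Then for every prime ℓ ≠ p (including ℓ = q and ℓ = 2), the quaternion algebra ℍ[ℚ_ℓ, −q, −p] splits: there exists an isomorphism of ℚ_ℓ-algebras ℍ[ℚ_ℓ, −q, −p] ≅ M₂(ℚ_ℓ). -/

import Mathlib

open Quaternion Matrix
open Quaternion Matrix

/-- If `b = u² - a v²` with `a b ≠ 0`, the quaternion algebra `(a,b)` splits. -/
lemma quat_split_of_norm {F : Type*} [Field F] (h2 : (2 : F) ≠ 0) (a b u v : F) (ha : a ≠ 0) (hb : b ≠ 0)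
    (h : u ^ 2 - a * v ^ 2 = b) :
    Nonempty (ℍ[F, a, b] ≃ₐ[F] Matrix (Fin 2) (Fin 2) F) := by
  set I : Matrix (Fin 2) (Fin 2) F := !![0, a; 1, 0] with hI
  set J : Matrix (Fin 2) (Fin 2) F := !![u, -(a*v); v, -u] with hJ
  have hII : I * I = a • (1 : Matrix (Fin 2) (Fin 2) F) := by
    ext i j; fin_cases i <;> fin_cases j <;>
      simp [hI, Matrix.mul_apply, Fin.sum_univ_two]
  have hJJ : J * J = b • (1 : Matrix (Fin 2) (Fin 2) F) := by
    ext i j; fin_cases i <;> fin_cases j <;>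
      simp [hJ, Matrix.mul_apply, Fin.sum_univ_two] <;>
      (first
        | linear_combination h
        | ring)
  have hJI : J * I = -(I * J) := by
    ext i j; fin_cases i <;> fin_cases j <;>
      simp [hI, hJ, Matrix.mul_apply, Fin.sum_univ_two] <;> ring
  let B : QuaternionAlgebra.Basis (Matrix (Fin 2) (Fin 2) F) a 0 b :=
    { i := I, j := J, k := I * J, i_mul_i := by rw [hII]; simp, j_mul_j := hJJ,
      i_mul_j := rfl, j_mul_i := by rw [hJI]; simp }
  let f := B.liftHom
  have hIJ : I * J = !![a*v, -(a*u); u, -(a*v)] := by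
    ext i j; fin_cases i <;> fin_cases j <;>
      simp [hI, hJ, Matrix.mul_apply, Fin.sum_univ_two] <;> ring
  have hinj : Function.Injective f := by
    rw [injective_iff_map_eq_zero]
    intro x hx
    have hfx : (algebraMap F (Matrix (Fin 2) (Fin 2) F) x.re) + x.imI • I + x.imJ • J
        + x.imK • (I * J) = 0 := hx
    rw [hIJ, hI, hJ] at hfx
    have hent : ∀ i j, ((algebraMap F (Matrix (Fin 2) (Fin 2) F) x.re)
        + x.imI • (!![0, a; 1, 0] : Matrix (Fin 2) (Fin 2) F)
        + x.imJ • (!![u, -(a*v); v, -u] : Matrix (Fin 2) (Fin 2) F)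
        + x.imK • (!![a*v, -(a*u); u, -(a*v)] : Matrix (Fin 2) (Fin 2) F)) i j = 0 := by
      intro i j; rw [hfx]; rfl
    have e00 := hent 0 0
    have e01 := hent 0 1
    have e10 := hent 1 0
    have e11 := hent 1 1
    simp [Matrix.add_apply, Matrix.smul_apply, Matrix.algebraMap_matrix_apply] at e00 e01 e10 e11
    have hre : x.re = 0 := by
      have h' : (2 : F) * x.re = 0 := by linear_combination e00 + e11
      exact (mul_eq_zero.mp h').resolve_left h2
    have himI : x.imI = 0 := by
      have ha' : a * (x.imI - x.imJ * v - x.imK * u) = 0 := by linear_combination e01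
      have h'' := (mul_eq_zero.mp ha').resolve_left ha
      have h' : (2 : F) * x.imI = 0 := by linear_combination h'' + e10
      exact (mul_eq_zero.mp h').resolve_left h2
    have himK : x.imK = 0 := by
      have h' : x.imK * b = 0 := by
        linear_combination u * e10 - v * e00 - u * himI + v * hre - x.imK * h
      exact (mul_eq_zero.mp h').resolve_right hb
    have himJ : x.imJ = 0 := by
      have h' : x.imJ * b = 0 := by
        linear_combination u * e00 - (a*v) * e10 - u * hre + (a*v) * himI - x.imJ * h
      exact (mul_eq_zero.mp h').resolve_right hb
    ext <;> simp [hre, himI, himJ, himK]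
  have h4 : Module.finrank F ℍ[F,a,b] = Module.finrank F (Matrix (Fin 2) (Fin 2) F) := by
    rw [QuaternionAlgebra.finrank_eq_four, Module.finrank_matrix]
    simp
  have hsurj := (LinearMap.injective_iff_surjective_of_finrank_eq_finrank h4).mp
    (show Function.Injective f.toLinearMap from hinj)
  exact ⟨AlgEquiv.ofBijective f ⟨hinj, hsurj⟩⟩


lemma exists_u_v_of_sq {F : Type*} [Field F] (h2 : (2 : F) ≠ 0) {a : F} (ha : a ≠ 0)
    (hsq : ∃ s : F, s ^ 2 = a) (b : F) : ∃ u v : F, u ^ 2 - a * v ^ 2 = b := by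
  obtain ⟨s, hs⟩ := hsq
  have hs0 : s ≠ 0 := by rintro rfl; rw [← hs] at ha; simp at ha
  refine ⟨(b + 1) / 2, (b - 1) / (2 * s), ?_⟩
  field_simp
  linear_combination (b ^ 2 - 2 * b + 1) * hs

lemma padic_sqrt_odd (ℓ : ℕ) [hℓp : Fact ℓ.Prime] (hodd : ℓ ≠ 2) (a : ℤ)
    (ha : (a : ZMod ℓ) ≠ 0) (hsq : IsSquare ((a : ZMod ℓ))) :
    ∃ s : ℚ_[ℓ], s ^ 2 = (a : ℚ_[ℓ]) := by
  obtain ⟨r, hr⟩ := hsq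
  set t : ℤ := (r.val : ℤ) with ht
  haveI : NeZero ℓ := ⟨hℓp.out.ne_zero⟩
  have htr : ((t : ℤ) : ZMod ℓ) = r := by
    simp [ht, ZMod.natCast_val, ZMod.cast_id]
  have hr0 : r ≠ 0 := by rintro rfl; rw [hr] at ha; simp at ha
  have hdvd : (ℓ : ℤ) ∣ t ^ 2 - a := by
    have : ((t ^ 2 - a : ℤ) : ZMod ℓ) = 0 := by push_cast [htr, hr]; ring
    exact (ZMod.intCast_zmod_eq_zero_iff_dvd _ _).mp this
  set P : Polynomial ℤ_[ℓ] := Polynomial.X ^ 2 - Polynomial.C ((a : ℤ) : ℤ_[ℓ]) with hP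
  have hFeval : P.eval ((t : ℤ) : ℤ_[ℓ]) = ((t ^ 2 - a : ℤ) : ℤ_[ℓ]) := by
    simp [hP]
  have hFderiv : P.derivative.eval ((t : ℤ) : ℤ_[ℓ]) = ((2 * t : ℤ) : ℤ_[ℓ]) := by
    simp [hP, one_add_one_eq_two]
  have ht0 : ¬ (ℓ : ℤ) ∣ 2 * t := by
    intro hd
    rcases (Int.Prime.dvd_mul' (by exact_mod_cast hℓp.out) hd) with h | h
    · exact hodd ((Nat.prime_dvd_prime_iff_eq hℓp.out Nat.prime_two).mp (by exact_mod_cast h))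
    · have : ((t : ℤ) : ZMod ℓ) = 0 := (ZMod.intCast_zmod_eq_zero_iff_dvd _ _).mpr h
      rw [htr] at this; exact hr0 this
  have hnd : ‖P.derivative.eval ((t : ℤ) : ℤ_[ℓ])‖ = 1 := by
    rw [hFderiv]
    refine le_antisymm (PadicInt.norm_le_one _) (not_lt.mp fun hlt => ht0 ?_)
    exact (PadicInt.norm_int_lt_one_iff_dvd _).mp hlt
  have hnorm : ‖P.eval ((t : ℤ) : ℤ_[ℓ])‖ < ‖P.derivative.eval ((t : ℤ) : ℤ_[ℓ])‖ ^ 2 := by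
    rw [hnd, hFeval, one_pow]
    exact (PadicInt.norm_int_lt_one_iff_dvd _).mpr hdvd
  obtain ⟨z, hz, -⟩ := hensels_lemma hnorm
  have hz2 : z ^ 2 = ((a : ℤ) : ℤ_[ℓ]) := by
    have := hz
    simp [hP] at this
    exact sub_eq_zero.mp this
  refine ⟨((z : ℚ_[ℓ])), ?_⟩
  have := congrArg (fun w : ℤ_[ℓ] => (w : ℚ_[ℓ])) hz2
  push_cast at this ⊢
  exact this


lemma padic2_sqrt (a : ℤ) (h8 : (8 : ℤ) ∣ (1 - a)) : ∃ s : ℚ_[2], s ^ 2 = (a : ℚ_[2]) := by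
  set P : Polynomial ℤ_[2] := Polynomial.X ^ 2 - Polynomial.C ((a : ℤ) : ℤ_[2]) with hP
  have hFeval : P.eval (1 : ℤ_[2]) = ((1 - a : ℤ) : ℤ_[2]) := by simp [hP]
  have hFderiv : P.derivative.eval (1 : ℤ_[2]) = ((2 : ℤ) : ℤ_[2]) := by simp [hP, one_add_one_eq_two]
  have hnorm : ‖P.eval (1 : ℤ_[2])‖ < ‖P.derivative.eval (1 : ℤ_[2])‖ ^ 2 := by
    rw [hFeval, hFderiv]
    have h1 : ‖((1 - a : ℤ) : ℤ_[2])‖ ≤ (2 : ℝ) ^ (-(3 : ℕ) : ℤ) :=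
      PadicInt.norm_int_le_pow_iff_dvd.mpr (by exact_mod_cast h8)
    have h2 : ‖((2 : ℤ) : ℤ_[2])‖ = 2⁻¹ := by
      have := PadicInt.norm_p (p := 2)
      norm_num at this ⊢
      exact_mod_cast this
    rw [h2]
    refine lt_of_le_of_lt h1 ?_
    norm_num
  obtain ⟨z, hz, -⟩ := hensels_lemma hnorm
  have hz2 : z ^ 2 = ((a : ℤ) : ℤ_[2]) := by
    simp [hP] at hz
    exact sub_eq_zero.mp hz
  refine ⟨((z : ℚ_[2])), ?_⟩
  have := congrArg (fun w : ℤ_[2] => (w : ℚ_[2])) hz2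
  push_cast at this ⊢
  exact this


lemma key_exists (p q : ℕ) (hp : p.Prime) (hq : q.Prime) (hp1 : p % 4 = 1) (hq3 : q % 4 = 3)
    (hqr : ¬ IsSquare (q : ZMod p)) (ℓ : ℕ) [hℓp : Fact ℓ.Prime] (hℓ : ℓ ≠ p) :
    ∃ u v : ℚ_[ℓ], u ^ 2 - (-(q : ℚ_[ℓ])) * v ^ 2 = -(p : ℚ_[ℓ]) := by
  haveI : Fact p.Prime := ⟨hp⟩
  haveI : Fact q.Prime := ⟨hq⟩
  have hq2 : q ≠ 2 := by omega
  have hp2 : p ≠ 2 := by omega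
  have hq0Q : (q : ℚ_[ℓ]) ≠ 0 := Nat.cast_ne_zero.mpr hq.ne_zero
  have hp0Q : (p : ℚ_[ℓ]) ≠ 0 := Nat.cast_ne_zero.mpr hp.ne_zero
  have h2Q : (2 : ℚ_[ℓ]) ≠ 0 := by norm_num
  by_cases hℓ2 : ℓ = 2
  · subst hℓ2
    obtain ⟨k, hk⟩ : ∃ k, p = 8 * k + 1 ∨ p = 8 * k + 5 := ⟨p / 8, by omega⟩
    obtain ⟨m, hm⟩ : ∃ m, q = 8 * m + 3 ∨ q = 8 * m + 7 := ⟨q / 8, by omega⟩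
    rcases hm with hm | hm
    · -- q ≡ 3 (mod 8)
      rcases hk with hk | hk
      · -- p ≡ 1 (mod 8) ; use u = 2, v = s/q with s² = (-p-4)q
        obtain ⟨s, hs⟩ := padic2_sqrt ((-(p : ℤ) - 4) * q)
          ⟨8 * k * m + 3 * k + 5 * m + 2, by subst hk hm; push_cast; ring⟩
        have hs' : s ^ 2 = (-(p : ℚ_[2]) - 4) * q := by push_cast at hs; linear_combination hs
        refine ⟨2, s / q, ?_⟩
        field_simp
        linear_combination hs'
      · -- p ≡ 5 (mod 8) ; use u = 0, v = s/q with s² = -pq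
        obtain ⟨s, hs⟩ := padic2_sqrt (-(p : ℤ) * q)
          ⟨8 * k * m + 3 * k + 5 * m + 2, by subst hk hm; push_cast; ring⟩
        have hs' : s ^ 2 = -(p : ℚ_[2]) * q := by push_cast at hs; linear_combination hs
        refine ⟨0, s / q, ?_⟩
        field_simp
        linear_combination hs'
    · -- q ≡ 7 (mod 8) : -q is a square in ℚ₂
      obtain ⟨s, hs⟩ := padic2_sqrt (-(q : ℤ)) ⟨m + 1, by subst hm; push_cast; ring⟩
      have hs' : s ^ 2 = -(q : ℚ_[2]) := by push_cast at hs; linear_combination hs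
      exact exists_u_v_of_sq h2Q (neg_ne_zero.mpr hq0Q) ⟨s, hs'⟩ _
  · -- ℓ odd
    by_cases hℓq : ℓ = q
    · -- ℓ = q : -p is a square in ℚ_q
      subst hℓq
      have hℓp' : ((p : ℤ) : ZMod ℓ) ≠ 0 := by
        rw [Ne, ZMod.intCast_zmod_eq_zero_iff_dvd]
        intro hdvd
        exact hℓ ((Nat.prime_dvd_prime_iff_eq hℓp.out hp).mp (Int.ofNat_dvd.mp hdvd))
      have hnegp0 : ((-(p : ℤ) : ℤ) : ZMod ℓ) ≠ 0 := by
        rw [Int.cast_neg]; exact neg_ne_zero.mpr hℓp'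
      have h1 : legendreSym p ℓ = -1 := by
        rw [legendreSym.eq_neg_one_iff']; exact hqr
      have hrec : legendreSym ℓ p = -1 := by
        rw [legendreSym.quadratic_reciprocity_one_mod_four hp1 hℓ2]; exact h1
      have hm1 : legendreSym ℓ (-1) = -1 := by
        rw [legendreSym.at_neg_one hℓ2]; exact ZMod.χ₄_nat_three_mod_four hq3
      have h4 : legendreSym ℓ (-(p : ℤ)) = 1 := by
        rw [show -(p : ℤ) = -1 * p by ring, legendreSym.mul, hm1]
        rw [show legendreSym ℓ (p : ℤ) = legendreSym ℓ p from rfl, hrec]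
        ring
      have hsq : IsSquare ((-(p : ℤ) : ℤ) : ZMod ℓ) := (legendreSym.eq_one_iff ℓ hnegp0).mp h4
      obtain ⟨s, hs⟩ := padic_sqrt_odd ℓ hℓ2 _ hnegp0 hsq
      refine ⟨s, 0, ?_⟩
      push_cast at hs
      linear_combination hs
    · -- ℓ ∤ 2pq
      have hℓq' : ((q : ℤ) : ZMod ℓ) ≠ 0 := by
        rw [Ne, ZMod.intCast_zmod_eq_zero_iff_dvd]
        intro hdvd
        exact hℓq ((Nat.prime_dvd_prime_iff_eq hℓp.out hq).mp (Int.ofNat_dvd.mp hdvd))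
      have hℓp' : ((p : ℤ) : ZMod ℓ) ≠ 0 := by
        rw [Ne, ZMod.intCast_zmod_eq_zero_iff_dvd]
        intro hdvd
        exact hℓ ((Nat.prime_dvd_prime_iff_eq hℓp.out hp).mp (Int.ofNat_dvd.mp hdvd))
      have hnegq0 : ((-(q : ℤ) : ℤ) : ZMod ℓ) ≠ 0 := by
        rw [Int.cast_neg]; exact neg_ne_zero.mpr hℓq'
      have hnegp0 : ((-(p : ℤ) : ℤ) : ZMod ℓ) ≠ 0 := by
        rw [Int.cast_neg]; exact neg_ne_zero.mpr hℓp'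
      by_cases hA : IsSquare ((-(q : ℤ) : ℤ) : ZMod ℓ)
      · obtain ⟨s, hs⟩ := padic_sqrt_odd ℓ hℓ2 _ hnegq0 hA
        have hs' : s ^ 2 = -(q : ℚ_[ℓ]) := by push_cast at hs; linear_combination hs
        exact exists_u_v_of_sq h2Q (neg_ne_zero.mpr hq0Q) ⟨s, hs'⟩ _
      by_cases hB : IsSquare ((-(p : ℤ) : ℤ) : ZMod ℓ)
      · obtain ⟨s, hs⟩ := padic_sqrt_odd ℓ hℓ2 _ hnegp0 hB
        refine ⟨s, 0, ?_⟩
        push_cast at hs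
        linear_combination hs
      have hχq : legendreSym ℓ (-(q : ℤ)) = -1 := (legendreSym.eq_neg_one_iff _).mpr hA
      have hχp : legendreSym ℓ (-(p : ℤ)) = -1 := (legendreSym.eq_neg_one_iff _).mpr hB
      by_cases hC : IsSquare ((-1 : ZMod ℓ))
      · -- -qp is a square
        have hm1ne : ((-1 : ℤ) : ZMod ℓ) ≠ 0 := by
          simp only [Int.cast_neg, Int.cast_one, neg_ne_zero]
          exact one_ne_zero
        have hχ1 : legendreSym ℓ (-1) = 1 :=
          (legendreSym.eq_one_iff ℓ hm1ne).mpr (by exact_mod_cast hC)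
        have hprodne : (((-1) * -(q : ℤ) * -(p : ℤ) : ℤ) : ZMod ℓ) ≠ 0 := by
          push_cast
          simp only [neg_mul, one_mul, neg_neg, mul_neg, neg_ne_zero]
          exact mul_ne_zero (by exact_mod_cast hℓq') (by exact_mod_cast hℓp')
        have hprod : legendreSym ℓ ((-1) * -(q : ℤ) * -(p : ℤ)) = 1 := by
          rw [legendreSym.mul, legendreSym.mul, hχ1, hχq, hχp]; ring
        have hsq : IsSquare ((((-1) * -(q : ℤ) * -(p : ℤ)) : ℤ) : ZMod ℓ) :=
          (legendreSym.eq_one_iff ℓ hprodne).mp hprod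
        obtain ⟨s, hs⟩ := padic_sqrt_odd ℓ hℓ2 _ hprodne hsq
        have hs' : s ^ 2 = -((q : ℚ_[ℓ]) * p) := by push_cast at hs; linear_combination hs
        refine ⟨0, s / q, ?_⟩
        field_simp
        linear_combination hs'
      · -- q and p are squares mod ℓ, use solution of x² + y² = -1
        have hχm1 : legendreSym ℓ (-1) = -1 :=
          (legendreSym.eq_neg_one_iff _).mpr (by exact_mod_cast hC)
        have hq1 : legendreSym ℓ ((q : ℕ) : ℤ) = 1 := by
          have h := legendreSym.mul ℓ (-1) (q : ℤ)
          rw [show (-1 : ℤ) * q = -(q : ℤ) by ring, hχq, hχm1] at h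
          linarith
        have hp1' : legendreSym ℓ ((p : ℕ) : ℤ) = 1 := by
          have h := legendreSym.mul ℓ (-1) (p : ℤ)
          rw [show (-1 : ℤ) * p = -(p : ℤ) by ring, hχp, hχm1] at h
          linarith
        obtain ⟨tq, htq⟩ := padic_sqrt_odd ℓ hℓ2 (q : ℤ) hℓq'
          ((legendreSym.eq_one_iff ℓ hℓq').mp hq1)
        obtain ⟨tp, htp⟩ := padic_sqrt_odd ℓ hℓ2 (p : ℤ) hℓp'
          ((legendreSym.eq_one_iff ℓ hℓp').mp hp1')
        obtain ⟨x, y, hxy⟩ := ZMod.sq_add_sq ℓ (-1 : ZMod ℓ)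
        have hx0 : x ≠ 0 := by
          rintro rfl
          exact hC ⟨y, by rw [← hxy]; ring⟩
        haveI : NeZero ℓ := ⟨hℓp.out.ne_zero⟩
        set B : ℤ := (y.val : ℤ) with hB
        have hBy : ((B : ℤ) : ZMod ℓ) = y := by
          simp [hB, ZMod.natCast_val, ZMod.cast_id]
        have hsqB : IsSquare (((-1 - B ^ 2 : ℤ)) : ZMod ℓ) := by
          refine ⟨x, ?_⟩
          push_cast [hBy]
          linear_combination -hxy
        have hneB : (((-1 - B ^ 2 : ℤ)) : ZMod ℓ) ≠ 0 := by
          have : (((-1 - B ^ 2 : ℤ)) : ZMod ℓ) = x * x := by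
            push_cast [hBy]; linear_combination -hxy
          rw [this]
          exact mul_ne_zero hx0 hx0
        obtain ⟨X, hX⟩ := padic_sqrt_odd ℓ hℓ2 _ hneB hsqB
        have hX' : X ^ 2 = -1 - (B : ℚ_[ℓ]) ^ 2 := by push_cast at hX; linear_combination hX
        have htq' : tq ^ 2 = (q : ℚ_[ℓ]) := by exact_mod_cast htq
        have htp' : tp ^ 2 = (p : ℚ_[ℓ]) := by exact_mod_cast htp
        have htq0 : tq ≠ 0 := by
          intro h
          rw [h] at htq'
          exact hq0Q (by simpa using htq'.symm)
        refine ⟨X * tp, (B : ℚ_[ℓ]) * tp / tq, ?_⟩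
        field_simp
        linear_combination (tp ^ 2 * tq ^ 2) * hX' + (-1 - (B : ℚ_[ℓ]) ^ 2) * tq ^ 2 * htp'
          + (B : ℚ_[ℓ]) ^ 2 * tp ^ 2 * htq' - (B : ℚ_[ℓ]) ^ 2 * tp ^ 2 * htq'
          + (B : ℚ_[ℓ]) ^ 2 * (q : ℚ_[ℓ]) * htp' - (B : ℚ_[ℓ]) ^ 2 * (p : ℚ_[ℓ]) * htq'

/-- Let `p ≡ 1 (mod 4)` and `q ≡ 3 (mod 4)` be primes such that `q` is not a quadratic
residue mod `p`. Then for every prime `ℓ ≠ p` (including `ℓ = q` and `ℓ = 2`), the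
quaternion algebra `ℍ[ℚ_ℓ, −q, −p]` splits: `ℍ[ℚ_ℓ, −q, −p] ≅ M₂(ℚ_ℓ)` as
`ℚ_ℓ`-algebras. -/
theorem quaternionAlgebra_padic_neg_q_neg_p_splits (p q : ℕ) (hp : p.Prime)
    (hq : q.Prime) (hp1 : p % 4 = 1) (hq3 : q % 4 = 3)
    (hqr : ¬ IsSquare (q : ZMod p)) (ℓ : ℕ) [Fact ℓ.Prime] (hℓ : ℓ ≠ p) :
    Nonempty (ℍ[ℚ_[ℓ], -(q : ℚ_[ℓ]), -(p : ℚ_[ℓ])] ≃ₐ[ℚ_[ℓ]]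
      Matrix (Fin 2) (Fin 2) ℚ_[ℓ]) := by
  obtain ⟨u, v, huv⟩ := key_exists p q hp hq hp1 hq3 hqr ℓ hℓ
  have hq0 : (q : ℚ_[ℓ]) ≠ 0 := Nat.cast_ne_zero.mpr hq.ne_zero
  have hp0 : (p : ℚ_[ℓ]) ≠ 0 := Nat.cast_ne_zero.mpr hp.ne_zero
  exact quat_split_of_norm (by norm_num) _ _ u v (neg_ne_zero.mpr hq0)
    (neg_ne_zero.mpr hp0) huv
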